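/- If $f, g : \mathbf{N} \to H$ are measurable functions from the space of $\sigma$-finite counting measures on $E$ to a separable Hilbert space $H$ such that $f(N) = g(N)$ $\mathbb{P}$-almost surely, where $N$ is a Poisson random measure with $\sigma$-finite intensity $\mu$, then $f(N + \delta_x) = g(N + \delta_x)$ holds $\mathbb{P}\otimes\mu$-almost everywhere in $(\omega, x) \in \Omega \times E$. In particular the operator $F \mapsto (\varepsilon_x^+ F)_{x\in E}$ is well-defined from $L^0(\Omega;H)$ to $L^0(\Omega\times E;H)$. -/

import Mathlib

open MeasureTheory Filter
open scoped ENNReal RealInnerProductSpace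

/-- **Mecke's formula** (add-one form), characterizing Poisson random measures
with σ-finite intensity `μ`. -/
def MeckeAdd {Ω E : Type*} [MeasurableSpace Ω] [MeasurableSpace E]
    (P : Measure Ω) (μ : Measure E) (N : Ω → Measure E) : Prop :=
  ∀ f : Measure E → E → ℝ≥0∞, Measurable (Function.uncurry f) →
    ∫⁻ ω, ∫⁻ x, f (N ω) x ∂(N ω) ∂P
      = ∫⁻ ω, ∫⁻ x, f (N ω + Measure.dirac x) x ∂μ ∂P

/-- **Well-definedness of `ε⁺`** : if `f, g : 𝐍 → H` are measurable with
`f (N) = g (N)` `P`-a.s., where `N` is a Poisson random measure with σ-finite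
intensity `μ`, then `f (N + δ_x) = g (N + δ_x)` for `P ⊗ μ`-a.e. `(ω, x)`.
In particular `F ↦ (ε⁺_x F)` is well-defined from `L⁰(Ω;H)` to `L⁰(Ω × E;H)`. -/
theorem epsPlus_well_defined
    {Ω E H : Type*} [MeasurableSpace Ω] [MeasurableSpace E]
    [NormedAddCommGroup H] [InnerProductSpace ℝ H] [CompleteSpace H]
    [TopologicalSpace.SeparableSpace H]
    (P : Measure Ω) [IsProbabilityMeasure P] (μ : Measure E) [SigmaFinite μ]
    (N : Ω → Measure E) (hMecke : MeckeAdd P μ N) (hN : Measurable N)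
    (f g : Measure E → H) (hf : StronglyMeasurable f) (hg : StronglyMeasurable g)
    (hfg : ∀ᵐ ω ∂P, f (N ω) = g (N ω)) :
    ∀ᵐ p ∂(P.prod μ), f (N p.1 + Measure.dirac p.2) = g (N p.1 + Measure.dirac p.2) := by
  -- the set of measures where f and g disagree
  set D : Set (Measure E) := {ν | f ν = g ν}ᶜ with hDdef
  have hD : MeasurableSet D := (hf.measurableSet_eq_fun hg).compl
  -- apply Mecke's formula to the indicator of D (constant in x)
  set F : Measure E → E → ℝ≥0∞ := fun ν _ => D.indicator (fun _ => 1) ν with hFdef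
  have hF : Measurable (Function.uncurry F) := by
    have : Function.uncurry F = fun p : (Measure E) × E => D.indicator (fun _ => 1) p.1 := rfl
    rw [this]
    exact (measurable_one.indicator hD).comp measurable_fst
  have key := hMecke F hF
  -- the left side vanishes since f (N ω) = g (N ω) a.s.
  have hLHS : ∫⁻ ω, ∫⁻ x, F (N ω) x ∂(N ω) ∂P = 0 := by
    rw [← lintegral_zero (μ := P)]
    apply lintegral_congr_ae
    filter_upwards [hfg] with ω hω
    have : F (N ω) = fun _ => 0 := by
      funext x
      simp only [hFdef, hDdef]
      rw [Set.indicator_of_notMem]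
      simp [hω]
    rw [this, lintegral_zero]
  -- measurability of (ω, x) ↦ N ω + δ x
  have hφ : Measurable (fun p : Ω × E => N p.1 + Measure.dirac p.2) :=
    (hN.comp measurable_fst).add (Measure.measurable_dirac.comp measurable_snd)
  -- the right side is the product measure of the bad set
  have hRHS : ∫⁻ ω, ∫⁻ x, F (N ω + Measure.dirac x) x ∂μ ∂P
      = (P.prod μ) ((fun p : Ω × E => N p.1 + Measure.dirac p.2) ⁻¹' D) := by
    have heq : ∀ p : Ω × E, F (N p.1 + Measure.dirac p.2) p.2
        = ((fun p : Ω × E => N p.1 + Measure.dirac p.2) ⁻¹' D).indicator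
            (fun _ => (1 : ℝ≥0∞)) p := by
      intro p
      by_cases h : N p.1 + Measure.dirac p.2 ∈ D <;>
        simp [hFdef, Set.indicator_apply, h]
    calc ∫⁻ ω, ∫⁻ x, F (N ω + Measure.dirac x) x ∂μ ∂P
        = ∫⁻ ω, ∫⁻ x, ((fun p : Ω × E => N p.1 + Measure.dirac p.2) ⁻¹' D).indicator
            (fun _ => (1 : ℝ≥0∞)) (ω, x) ∂μ ∂P :=
          lintegral_congr fun ω => lintegral_congr fun x => heq (ω, x)
      _ = ∫⁻ p, ((fun p : Ω × E => N p.1 + Measure.dirac p.2) ⁻¹' D).indicator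
            (fun _ => (1 : ℝ≥0∞)) p ∂(P.prod μ) :=
          (lintegral_prod _ (measurable_one.indicator (hφ hD)).aemeasurable).symm
      _ = (P.prod μ) ((fun p : Ω × E => N p.1 + Measure.dirac p.2) ⁻¹' D) :=
          lintegral_indicator_one (hφ hD)
    
  have hzero : (P.prod μ) ((fun p : Ω × E => N p.1 + Measure.dirac p.2) ⁻¹' D) = 0 := by
    rw [← hRHS, ← key, hLHS]
  rw [ae_iff]
  convert hzero using 2
  rfl
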